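/- Let A and B be C*-algebras with A unital, and let T : A → B be a linear map satisfying: (a) for all a, b ∈ A, a b* = 1 implies T(a) T(b)* = T(1); and (b) for all c, d ∈ A, c* d = 0 implies T(c)* T(d) = 0. Then T is a *-homomorphism, i.e., T(xy) = T(x) T(y) and T(x*) = T(x)* for all x, y ∈ A. -/

import Mathlib

open Finset

namespace StmtAux


lemma partition_data (L δ : ℝ) (hδ : 0 < δ) :
    ∃ (M : ℕ) (g : ℕ → ℝ → ℝ) (c : ℕ → ℝ),
      (∀ j, Continuous (g j)) ∧
      (∀ j t, 0 ≤ g j t) ∧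
      (∀ j l t, j + 2 ≤ l → g j t * g l t = 0) ∧
      (∀ t, |t| ≤ L → ∑ j ∈ Finset.range M, g j t = 1) ∧
      (∀ j t, |t - c j| * g j t ≤ δ * g j t) ∧
      (∀ j, c (j + 1) - c j = δ) := by
  set s : ℕ → ℝ := fun j => -L - δ + j * δ with hs
  set ψ : ℕ → ℝ → ℝ := fun j t => min 1 (max 0 ((s j + δ - t) / δ)) with hψ
  set g : ℕ → ℝ → ℝ := fun j t => ψ (j + 1) t - ψ j t with hg
  have hsmono : ∀ {j l : ℕ}, j ≤ l → s j ≤ s l := by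
    intro j l hjl
    simp only [hs]
    have : (j : ℝ) ≤ (l : ℝ) := by exact_mod_cast hjl
    nlinarith
  have hψ_one : ∀ j t, t ≤ s j → ψ j t = 1 := by
    intro j t ht
    have h1 : (1 : ℝ) ≤ (s j + δ - t) / δ := by
      rw [le_div_iff₀ hδ]; linarith
    simp only [hψ]
    rw [min_eq_left (le_max_of_le_right h1)]
  have hψ_zero : ∀ j t, s j + δ ≤ t → ψ j t = 0 := by
    intro j t ht
    have h1 : (s j + δ - t) / δ ≤ 0 := div_nonpos_of_nonpos_of_nonneg (by linarith) hδ.le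
    simp only [hψ]
    rw [max_eq_left h1, min_eq_right zero_le_one]
  have hψmono : ∀ j t, ψ j t ≤ ψ (j + 1) t := by
    intro j t
    have h1 : (s j + δ - t) / δ ≤ (s (j + 1) + δ - t) / δ := by
      have h2 : s j ≤ s (j + 1) := hsmono (Nat.le_succ j)
      gcongr
    exact min_le_min le_rfl (max_le_max le_rfl h1)
  have hψ01 : ∀ j t, 0 ≤ ψ j t ∧ ψ j t ≤ 1 := by
    intro j t
    constructor
    · exact le_min zero_le_one (le_max_left 0 _)
    · exact min_le_left _ _
  have hg0 : ∀ j t, 0 ≤ g j t := fun j t => sub_nonneg.mpr (hψmono j t)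
  have hgsupp1 : ∀ j t, t ≤ s j → g j t = 0 := by
    intro j t ht
    simp only [hg]
    rw [hψ_one j t ht, hψ_one (j + 1) t (ht.trans (hsmono (Nat.le_succ j))), sub_self]
  have hgsupp2 : ∀ j t, s j + 2 * δ ≤ t → g j t = 0 := by
    intro j t ht
    have h1 : s (j + 1) + δ ≤ t := by
      simp only [hs] at ht ⊢
      push_cast
      linarith
    simp only [hg]
    rw [hψ_zero j t (by linarith [hsmono (Nat.le_succ j)]; ), hψ_zero (j + 1) t h1, sub_self]
  refine ⟨⌈2 * L / δ⌉₊ + 1, g, fun j => s j + δ, ?_, hg0, ?_, ?_, ?_, ?_⟩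
  · intro j
    simp only [hg, hψ]
    fun_prop
  · intro j l t hjl
    rcases le_or_gt t (s l) with h | h
    · rw [hgsupp1 l t h, mul_zero]
    · have : s j + 2 * δ ≤ t := by
        have h2 : s (j + 2) ≤ s l := hsmono hjl
        have : s j + 2 * δ = s (j + 2) := by simp only [hs]; push_cast; ring
        linarith
      rw [hgsupp2 j t this, zero_mul]
  · intro t ht
    have htel : ∑ j ∈ Finset.range (⌈2 * L / δ⌉₊ + 1), g j t
        = ψ (⌈2 * L / δ⌉₊ + 1) t - ψ 0 t := Finset.sum_range_sub (fun j => ψ j t) _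
    rw [htel]
    have hL0 : 0 ≤ L := le_trans (abs_nonneg t) ht
    have h1 : ψ (⌈2 * L / δ⌉₊ + 1) t = 1 := by
      apply hψ_one
      have hceil : 2 * L / δ ≤ (⌈2 * L / δ⌉₊ : ℝ) := Nat.le_ceil _
      have h2 : 2 * L ≤ (⌈2 * L / δ⌉₊ : ℝ) * δ := by
        rw [div_le_iff₀ hδ] at hceil; linarith
      have h3 : t ≤ L := (abs_le.mp ht).2
      simp only [hs]
      push_cast
      nlinarith
    have h0 : ψ 0 t = 0 := by
      apply hψ_zero
      have h3 : -L ≤ t := (abs_le.mp ht).1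
      simp only [hs]
      push_cast
      linarith
    rw [h1, h0, sub_zero]
  · intro j t
    rcases eq_or_lt_of_le (hg0 j t) with h | h
    · rw [← h, mul_zero, mul_zero]
    · have hne : g j t ≠ 0 := ne_of_gt h
      have h1 : s j < t := by
        by_contra hc
        push_neg at hc
        exact hne (hgsupp1 j t hc)
      have h2 : t < s j + 2 * δ := by
        by_contra hc
        push_neg at hc
        exact hne (hgsupp2 j t hc)
      have : |t - (s j + δ)| ≤ δ := by
        rw [abs_le]; constructor <;> linarith
      exact mul_le_mul_of_nonneg_right this (hg0 j t)
  · intro j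
    simp only [hs]
    push_cast
    ring

section Aux

variable {A B : Type*} [CStarAlgebra A] [NonUnitalCStarAlgebra B]

lemma exists_unitary_pair [Nontrivial A] (a : A) (hsa : IsSelfAdjoint a) (hn : ‖a‖ ≤ 1) :
    ∃ u : A, u * star u = 1 ∧ star u * u = 1 ∧ u + star u = a + a := by
  have hspec : ∀ t ∈ spectrum ℝ a, 0 ≤ 1 - t * t := by
    intro t ht
    have h1 : |t| ≤ 1 := le_trans (by simpa using spectrum.norm_le_norm_of_mem ht) hn
    nlinarith [abs_nonneg t, le_abs_self t, neg_abs_le t]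
  set f : ℝ → ℝ := fun t => Real.sqrt (1 - t * t) with hf
  have hfc : Continuous f := by fun_prop
  set w : A := cfc f a with hw
  have hwsa : IsSelfAdjoint w := cfc_predicate f a
  have hww : w * w = 1 - a * a := by
    rw [hw, ← cfc_mul f f a (hfc.continuousOn) (hfc.continuousOn)]
    have h2 : cfc (fun t => f t * f t) a = cfc (fun t : ℝ => 1 - t * t) a :=
      cfc_congr fun t ht => Real.mul_self_sqrt (hspec t ht)
    rw [h2, cfc_sub (fun _ : ℝ => (1:ℝ)) (fun t : ℝ => t * t) a (by fun_prop) (by fun_prop),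
      cfc_const (1:ℝ) a hsa, cfc_mul _ _ a (by fun_prop) (by fun_prop), cfc_id' ℝ a hsa, map_one]
  have hcomm : a * w = w * a := by
    rw [hw]
    nth_rewrite 1 [← cfc_id' ℝ a hsa]
    nth_rewrite 4 [← cfc_id' ℝ a hsa]
    rw [← cfc_mul _ _ a (by fun_prop) (hfc.continuousOn),
        ← cfc_mul _ _ a (hfc.continuousOn) (by fun_prop)]
    exact cfc_congr fun t _ => mul_comm t (f t)
  have hstar : star (a + Complex.I • w) = a - Complex.I • w := by
    simp [star_smul, Complex.star_def, Complex.conj_I, hsa.star_eq, hwsa.star_eq, neg_smul,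
      sub_eq_add_neg]
  set v : A := Complex.I • w with hv
  have hva : v * a = a * v := by rw [hv, smul_mul_assoc, mul_smul_comm, hcomm]
  have hvv : v * v = -(w * w) := by
    rw [hv, smul_mul_assoc, mul_smul_comm, smul_smul, Complex.I_mul_I, neg_smul, one_smul]
  refine ⟨a + v, ?_, ?_, ?_⟩
  · rw [hstar]
    have expand : (a + v) * (a - v) = a * a - v * v := by
      rw [mul_sub, add_mul, add_mul, hva]; abel
    rw [expand, hvv, hww]; abel
  · rw [hstar]
    have expand : (a - v) * (a + v) = a * a - v * v := by
      rw [mul_add, sub_mul, sub_mul, hva]; abel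
    rw [expand, hvv, hww]; abel
  · rw [hstar]; abel

variable (T : A →ₗ[ℂ] B)

lemma half_sa : IsSelfAdjoint (2⁻¹ : ℂ) := by
  rw [IsSelfAdjoint, Complex.star_def, ← Complex.ofReal_ofNat, ← Complex.ofReal_inv,
    Complex.conj_ofReal]

lemma re_decomp (x : A) :
    IsSelfAdjoint ((2⁻¹ : ℂ) • (x + star x)) ∧
    IsSelfAdjoint ((2⁻¹ : ℂ) • (Complex.I • (star x - x))) ∧
    x = (2⁻¹ : ℂ) • (x + star x) + Complex.I • ((2⁻¹ : ℂ) • (Complex.I • (star x - x))) ∧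
    ‖(2⁻¹ : ℂ) • (x + star x)‖ ≤ ‖x‖ ∧ ‖(2⁻¹ : ℂ) • (Complex.I • (star x - x))‖ ≤ ‖x‖ := by
  refine ⟨?_, ?_, ?_, ?_, ?_⟩
  · exact (half_sa).smul (by rw [IsSelfAdjoint, star_add, star_star, add_comm])
  · refine (half_sa).smul ?_
    rw [IsSelfAdjoint, star_smul, Complex.star_def, Complex.conj_I, star_sub, star_star,
      neg_smul, ← smul_neg, neg_sub]
  · have hcoef : Complex.I * 2⁻¹ * Complex.I = -2⁻¹ := by
      rw [mul_comm Complex.I (2⁻¹:ℂ), mul_assoc, Complex.I_mul_I]; ring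
    rw [smul_smul, smul_smul, hcoef, neg_smul, ← smul_neg, neg_sub, ← smul_add]
    have : x + star x + (x - star x) = x + x := by abel
    rw [this, ← two_smul ℂ x, smul_smul]
    norm_num
  · rw [norm_smul]
    have : ‖(2⁻¹ : ℂ)‖ = 2⁻¹ := by norm_num
    rw [this]
    have := norm_add_le x (star x)
    rw [norm_star] at this
    linarith
  · rw [norm_smul, norm_smul]
    have h1 : ‖(2⁻¹ : ℂ)‖ = 2⁻¹ := by norm_num
    have h2 : ‖Complex.I‖ = 1 := by simp
    rw [h1, h2, one_mul]
    have := norm_sub_le (star x) x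
    rw [norm_star] at this
    linarith

section withha
variable (ha : ∀ a b : A, a * star b = 1 → T a * star (T b) = T 1)
include ha

lemma h_self : T 1 * star (T 1) = T 1 := ha 1 1 (by simp)

lemma h_star : star (T 1) = T 1 := by
  have h1 := h_self T ha
  have h2 : star (T 1 * star (T 1)) = star (T 1) := congrArg star h1
  rw [star_mul, star_star] at h2
  rw [h1] at h2
  exact h2.symm

lemma h_idem : T 1 * T 1 = T 1 := by
  have := h_self T ha
  rwa [h_star T ha] at this

lemma h_norm : ‖T 1‖ ≤ 1 := by
  have h1 : ‖T 1‖ * ‖T 1‖ = ‖T 1‖ := by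
    rw [← CStarRing.norm_self_mul_star, h_self T ha]
  nlinarith [norm_nonneg (T 1)]

/-- absorption for "unitaries" -/
lemma h_absorb_u (u : A) (hu : u * star u = 1) : T 1 * T u = T u := by
  have hk : T u * star (T u) = T 1 := ha u u hu
  have he := h_self T ha
  have hs := h_star T ha
  set k := T u
  set e := T 1
  have key : (k - e * k) * star (k - e * k) = 0 := by
    rw [star_sub, star_mul, hs]
    rw [sub_mul, mul_sub, mul_sub, hk, mul_assoc, mul_assoc, ← mul_assoc k (star k) e, hk]
    have hee : e * e = e := h_idem T ha
    rw [← mul_assoc e e e, hee, hee]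
    abel
  have : ‖k - e * k‖ * ‖k - e * k‖ = 0 := by
    rw [← CStarRing.norm_self_mul_star, key, norm_zero]
  have h0 : ‖k - e * k‖ = 0 := by nlinarith [norm_nonneg (k - e * k)]
  have := norm_eq_zero.mp h0
  rw [sub_eq_zero] at this
  exact this.symm

lemma norm_Tu_le (u : A) (hu : u * star u = 1) : ‖T u‖ ≤ 1 := by
  have hk : T u * star (T u) = T 1 := ha u u hu
  have h1 : ‖T u‖ * ‖T u‖ = ‖T 1‖ := by rw [← CStarRing.norm_self_mul_star, hk]
  have := h_norm T ha
  nlinarith [norm_nonneg (T u)]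

lemma h_absorb_sa [Nontrivial A] (a : A) (hsa : IsSelfAdjoint a) : T 1 * T a = T a := by
  rcases eq_or_ne a 0 with rfl | hne
  · simp
  · set c : ℂ := (‖a‖ : ℂ) with hc
    have hc0 : c ≠ 0 := by
      simp [hc, Complex.ofReal_eq_zero, norm_eq_zero, hne]
    set a' : A := c⁻¹ • a with ha'
    have ha'sa : IsSelfAdjoint a' := by
      rw [ha', IsSelfAdjoint, star_smul, hsa.star_eq]
      congr 1
      simp [hc, ← Complex.ofReal_inv]
    have ha'n : ‖a'‖ ≤ 1 := by
      rw [ha', norm_smul]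
      simp only [norm_inv, hc, Complex.norm_real, Real.norm_eq_abs, abs_norm]
      rw [inv_mul_cancel₀ (norm_ne_zero_iff.mpr hne)]
    obtain ⟨u, hu1, hu2, hu3⟩ := exists_unitary_pair a' ha'sa ha'n
    have habs : T 1 * (T a' + T a') = T a' + T a' := by
      have : T a' + T a' = T u + T (star u) := by
        rw [← map_add, ← map_add, hu3]
      rw [this, mul_add, h_absorb_u T ha u hu1,
        h_absorb_u T ha (star u) (by rwa [star_star])]
    have h2 : (2:ℂ) • (T 1 * T a') = (2:ℂ) • T a' := by
      rw [two_smul, two_smul, ← mul_add, habs]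
    have h3 : T 1 * T a' = T a' := by
      have := congrArg (fun x => (2⁻¹:ℂ) • x) h2
      simpa [smul_smul] using this
    calc T 1 * T a = T 1 * (c • T a') := by rw [ha', map_smul, smul_smul,
          mul_inv_cancel₀ hc0, one_smul]
      _ = c • (T 1 * T a') := by rw [mul_smul_comm]
      _ = c • T a' := by rw [h3]
      _ = T a := by rw [ha', map_smul, smul_smul, mul_inv_cancel₀ hc0, one_smul]

lemma norm_T_sa_le [Nontrivial A] (a : A) (hsa : IsSelfAdjoint a) : ‖T a‖ ≤ ‖a‖ := by
  rcases eq_or_ne a 0 with rfl | hne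
  · simp
  · set c : ℂ := (‖a‖ : ℂ) with hc
    have hc0 : c ≠ 0 := by simp [hc, Complex.ofReal_eq_zero, norm_eq_zero, hne]
    set a' : A := c⁻¹ • a with ha'
    have ha'sa : IsSelfAdjoint a' := by
      rw [ha', IsSelfAdjoint, star_smul, hsa.star_eq]
      congr 1
      simp [hc, ← Complex.ofReal_inv]
    have ha'n : ‖a'‖ ≤ 1 := by
      rw [ha', norm_smul]
      simp only [norm_inv, hc, Complex.norm_real, Real.norm_eq_abs, abs_norm]
      rw [inv_mul_cancel₀ (norm_ne_zero_iff.mpr hne)]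
    obtain ⟨u, hu1, hu2, hu3⟩ := exists_unitary_pair a' ha'sa ha'n
    have habs : T a' + T a' = T u + T (star u) := by
      rw [← map_add, ← map_add, hu3]
    have hn2 : ‖T a' + T a'‖ ≤ 2 := by
      rw [habs]
      calc ‖T u + T (star u)‖ ≤ ‖T u‖ + ‖T (star u)‖ := norm_add_le _ _
        _ ≤ 1 + 1 := add_le_add (norm_Tu_le T ha u hu1)
            (norm_Tu_le T ha (star u) (by rwa [star_star]))
        _ = 2 := by norm_num
    have hTa' : ‖T a'‖ ≤ 1 := by
      have : T a' + T a' = (2:ℂ) • T a' := (two_smul ℂ _).symm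
      rw [this, norm_smul] at hn2
      simp only [Complex.norm_ofNat] at hn2
      linarith
    have : T a = c • T a' := by
      rw [ha', map_smul, smul_smul, mul_inv_cancel₀ hc0, one_smul]
    rw [this, norm_smul]
    simp only [hc, Complex.norm_real, Real.norm_eq_abs, abs_norm]
    nlinarith [norm_nonneg a, norm_nonneg (T a')]

lemma h_absorb [Nontrivial A] (x : A) : T 1 * T x = T x := by
  obtain ⟨h1, h2, h3, -, -⟩ := re_decomp x
  have hTx : T x = T ((2⁻¹ : ℂ) • (x + star x))
      + Complex.I • T ((2⁻¹ : ℂ) • (Complex.I • (star x - x))) := by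
    conv_lhs => rw [h3]
    rw [map_add, map_smul, map_smul]
  rw [hTx, mul_add, mul_smul_comm, h_absorb_sa T ha _ h1, h_absorb_sa T ha _ h2]

lemma norm_T_le [Nontrivial A] (x : A) : ‖T x‖ ≤ 2 * ‖x‖ := by
  obtain ⟨h1, h2, h3, h4, h5⟩ := re_decomp x
  calc ‖T x‖ = ‖T ((2⁻¹ : ℂ) • (x + star x)) + Complex.I • T ((2⁻¹ : ℂ) • (Complex.I • (star x - x)))‖ := by
        rw [← map_smul, ← map_add, ← h3]
    _ ≤ ‖T ((2⁻¹ : ℂ) • (x + star x))‖ + ‖Complex.I • T ((2⁻¹ : ℂ) • (Complex.I • (star x - x)))‖ :=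
        norm_add_le _ _
    _ ≤ ‖x‖ + ‖x‖ := by
        have e2 : ‖Complex.I • T ((2⁻¹ : ℂ) • (Complex.I • (star x - x)))‖
            = ‖T ((2⁻¹ : ℂ) • (Complex.I • (star x - x)))‖ := by
          rw [norm_smul]; simp
        rw [e2]
        exact add_le_add (le_trans (norm_T_sa_le T ha _ h1) h4)
          (le_trans (norm_T_sa_le T ha _ h2) h5)
    _ = 2 * ‖x‖ := by ring

end withha

end Aux

section Core

variable {A B : Type*} [CStarAlgebra A] [NonUnitalCStarAlgebra B]
variable (T : A →ₗ[ℂ] B)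

lemma collapse (hb : ∀ c d : A, star c * d = 0 → star (T c) * T d = 0)
    (J : Finset ℕ) (a b : ℕ → A) (y : A)
    (horth : ∀ j ∈ J, ∀ l ∈ J, j ≠ l → star (a j) * b l = 0) :
    star (T (∑ j ∈ J, a j)) * T ((∑ j ∈ J, b j) * y)
      = ∑ j ∈ J, star (T (a j)) * T (b j * y) := by
  rw [Finset.sum_mul, map_sum, map_sum, star_sum, Finset.sum_mul_sum]
  refine Finset.sum_congr rfl fun j hj => ?_
  refine Finset.sum_eq_single_of_mem j hj fun l hl hne => ?_
  exact hb (a j) (b l * y) (by rw [← mul_assoc, horth j hj l hl hne.symm, zero_mul])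


set_option maxHeartbeats 1000000 in
lemma M1 [Nontrivial A]
    (hb : ∀ c d : A, star c * d = 0 → star (T c) * T d = 0)
    (hTle : ∀ x : A, ‖T x‖ ≤ 2 * ‖x‖)
    (z : A) (hz : IsSelfAdjoint z) (y : A) :
    star (T z) * T y = star (T 1) * T (z * y) := by
  have key : ∀ δ : ℝ, 0 < δ →
      ‖star (T z) * T y - star (T 1) * T (z * y)‖ ≤ δ * (32 * (‖y‖ + 1)) := by
    intro δ hδ
    obtain ⟨M, g, c, hgc, hg0, hdisj, hsum1, hcen, hcdiff⟩ := partition_data ‖z‖ δ hδ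
    have hgcont : ∀ j, ContinuousOn (g j) (spectrum ℝ z) := fun j => (hgc j).continuousOn
    set p : ℕ → A := fun j => cfc (g j) z with hp
    have hspec : ∀ t ∈ spectrum ℝ z, |t| ≤ ‖z‖ := fun t ht => by
      simpa using spectrum.norm_le_norm_of_mem ht
    -- sums of p's as cfc
    have hcfcsum : ∀ J : Finset ℕ, ∑ j ∈ J, p j = cfc (fun t => ∑ j ∈ J, g j t) z := by
      intro J
      rw [hp, ← cfc_sum g z J (fun j _ => hgcont j)]
      congr 1
      ext t
      simp
    -- sum of all p's is 1
    have hp1 : ∑ j ∈ Finset.range M, p j = 1 := by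
      rw [hcfcsum]
      have h1 : cfc (fun t => ∑ j ∈ Finset.range M, g j t) z = cfc (fun _ : ℝ => (1:ℝ)) z :=
        cfc_congr fun t ht => hsum1 t (hspec t ht)
      rw [h1, cfc_const 1 z hz, map_one]
    -- products of far p's vanish
    have hmulz : ∀ j l : ℕ, (∀ t, g j t * g l t = 0) → p j * p l = 0 := by
      intro j l h
      rw [hp, ← cfc_mul _ _ z (hgcont j) (hgcont l)]
      have h2 : (fun t => g j t * g l t) = (fun _ : ℝ => (0:ℝ)) := funext h
      rw [h2, cfc_const 0 z hz, map_zero]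
    have hporth : ∀ j l : ℕ, j + 2 ≤ l ∨ l + 2 ≤ j → p j * p l = 0 := by
      intro j l hor
      rcases hor with h | h
      · exact hmulz j l fun t => hdisj j l t h
      · exact hmulz j l fun t => by rw [mul_comm]; exact hdisj l j t h
    have hpsa : ∀ j, IsSelfAdjoint (p j) := fun j => cfc_predicate (g j) z
    -- vanishing of far cross terms through T
    have hsjl : ∀ j l : ℕ, j + 2 ≤ l ∨ l + 2 ≤ j → star (T (p j)) * T (p l * y) = 0 := by
      intro j l hor
      exact hb (p j) (p l * y)
        (by rw [(hpsa j).star_eq, ← mul_assoc, hporth j l hor, zero_mul])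
    -- the approximation zh
    set zh : A := cfc (fun t => ∑ j ∈ Finset.range M, c j * g j t) z with hzh
    have hsumcont : ContinuousOn (fun t => ∑ j ∈ Finset.range M, c j * g j t) (spectrum ℝ z) := by
      apply Continuous.continuousOn
      exact continuous_finset_sum _ fun j _ => continuous_const.mul (hgc j)
    have hzh_sum : zh = ∑ j ∈ Finset.range M, (c j : ℂ) • p j := by
      rw [hzh]
      have e1 : (fun t => ∑ j ∈ Finset.range M, c j * g j t)
          = (∑ j ∈ Finset.range M, fun t => c j * g j t) := by
        ext t; simp
      rw [e1, cfc_sum (fun j t => c j * g j t) z _ (fun j _ => (continuous_const.mul (hgc j)).continuousOn)]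
      refine Finset.sum_congr rfl fun j _ => ?_
      rw [cfc_const_mul (c j) (g j) z (hgcont j), Complex.coe_smul]
    -- approximation bound
    have hzzh : ‖z - zh‖ ≤ δ := by
      have e2 : z - zh = cfc (fun t => t - ∑ j ∈ Finset.range M, c j * g j t) z := by
        rw [cfc_sub _ _ z (by fun_prop) hsumcont, cfc_id' ℝ z hz, hzh]
      rw [e2]
      apply norm_cfc_le hδ.le
      intro t ht
      have h1 : t - ∑ j ∈ Finset.range M, c j * g j t
          = ∑ j ∈ Finset.range M, (t - c j) * g j t := by
        have h2 : ∑ j ∈ Finset.range M, (t - c j) * g j t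
            = ∑ j ∈ Finset.range M, t * g j t - ∑ j ∈ Finset.range M, c j * g j t := by
          rw [← Finset.sum_sub_distrib]
          exact Finset.sum_congr rfl fun j _ => by ring
        rw [h2, ← Finset.mul_sum, hsum1 t (hspec t ht), mul_one]
      rw [Real.norm_eq_abs, h1]
      calc |∑ j ∈ Finset.range M, (t - c j) * g j t|
          ≤ ∑ j ∈ Finset.range M, |(t - c j) * g j t| := Finset.abs_sum_le_sum_abs _ _
        _ ≤ ∑ j ∈ Finset.range M, δ * g j t := by
            refine Finset.sum_le_sum fun j _ => ?_
            rw [abs_mul, abs_of_nonneg (hg0 j t)]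
            exact hcen j t
        _ = δ * ∑ j ∈ Finset.range M, g j t := by rw [Finset.mul_sum]
        _ = δ := by rw [hsum1 t (hspec t ht), mul_one]
    -- norm bound for partial sums of p's
    have hpJnorm : ∀ J : Finset ℕ, J ⊆ Finset.range M → ‖∑ j ∈ J, p j‖ ≤ 1 := by
      intro J hJ
      rw [hcfcsum J]
      apply norm_cfc_le zero_le_one
      intro t ht
      rw [Real.norm_eq_abs, abs_of_nonneg (Finset.sum_nonneg fun j _ => hg0 j t)]
      calc ∑ j ∈ J, g j t ≤ ∑ j ∈ Finset.range M, g j t :=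
            Finset.sum_le_sum_of_subset_of_nonneg hJ fun j _ _ => hg0 j t
        _ = 1 := hsum1 t (hspec t ht)
    -- decomposition of T y
    have hTy : T y = ∑ l ∈ Finset.range M, T (p l * y) := by
      have hy : y = (∑ l ∈ Finset.range M, p l) * y := by rw [hp1, one_mul]
      conv_lhs => rw [hy]
      rw [Finset.sum_mul, map_sum]
    have hstarTzh : star (T zh) = ∑ j ∈ Finset.range M, (c j : ℂ) • star (T (p j)) := by
      rw [hzh_sum, map_sum, star_sum]
      refine Finset.sum_congr rfl fun j _ => ?_
      rw [map_smul, star_smul, Complex.star_def, Complex.conj_ofReal]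
    have hstarT1 : star (T 1) = ∑ j ∈ Finset.range M, star (T (p j)) := by
      rw [← hp1, map_sum, star_sum]
    have hTzhy : T (zh * y) = ∑ l ∈ Finset.range M, (c l : ℂ) • T (p l * y) := by
      rw [hzh_sum, Finset.sum_mul, map_sum]
      refine Finset.sum_congr rfl fun l _ => ?_
      rw [smul_mul_assoc, map_smul]
    have hterm2 : star (T zh) * T y - star (T 1) * T (zh * y)
        = ∑ j ∈ Finset.range M, ∑ l ∈ Finset.range M,
            ((c j - c l : ℝ) : ℂ) • (star (T (p j)) * T (p l * y)) := by
      rw [hstarTzh, hTy, hstarT1, hTzhy, Finset.sum_mul_sum, Finset.sum_mul_sum,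
        ← Finset.sum_sub_distrib]
      refine Finset.sum_congr rfl fun j _ => ?_
      rw [← Finset.sum_sub_distrib]
      refine Finset.sum_congr rfl fun l _ => ?_
      rw [smul_mul_assoc, mul_smul_comm, ← sub_smul]
      congr 1
      push_cast
      ring
    have hFsplit : ∀ j l : ℕ, j ∈ Finset.range M → l ∈ Finset.range M →
        ((c j - c l : ℝ) : ℂ) • (star (T (p j)) * T (p l * y))
        = (if l = j + 1 then ((-δ : ℝ) : ℂ) • (star (T (p j)) * T (p l * y)) else 0)
          + (if j = l + 1 then ((δ : ℝ) : ℂ) • (star (T (p j)) * T (p l * y)) else 0) := by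
      intro j l _ _
      by_cases h1 : l = j + 1
      · have h2 : ¬ (j = l + 1) := by omega
        have hc1 : c j - c l = -δ := by
          have := hcdiff j
          rw [h1]; linarith
        rw [if_pos h1, if_neg h2, add_zero, hc1]
      · by_cases h2 : j = l + 1
        · have hc2 : c j - c l = δ := by
            have := hcdiff l
            rw [h2]; linarith
          rw [if_pos h2, if_neg h1, zero_add, hc2]
        · rw [if_neg h1, if_neg h2, add_zero]
          rcases eq_or_ne j l with rfl | hne
          · simp
          · have h3 : j + 2 ≤ l ∨ l + 2 ≤ j := by omega
            rw [hsjl j l h3, smul_zero]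
    have hdouble : ∑ j ∈ Finset.range M, ∑ l ∈ Finset.range M,
          ((c j - c l : ℝ) : ℂ) • (star (T (p j)) * T (p l * y))
        = ((-δ : ℝ) : ℂ) • (∑ j ∈ Finset.range (M - 1), star (T (p j)) * T (p (j + 1) * y))
          + ((δ : ℝ) : ℂ) • (∑ j ∈ Finset.range (M - 1), star (T (p (j + 1))) * T (p j * y)) := by
      have step1 : ∑ j ∈ Finset.range M, ∑ l ∈ Finset.range M,
            ((c j - c l : ℝ) : ℂ) • (star (T (p j)) * T (p l * y))
          = (∑ j ∈ Finset.range M, ∑ l ∈ Finset.range M,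
              (if l = j + 1 then ((-δ : ℝ) : ℂ) • (star (T (p j)) * T (p l * y)) else 0))
            + (∑ j ∈ Finset.range M, ∑ l ∈ Finset.range M,
              (if j = l + 1 then ((δ : ℝ) : ℂ) • (star (T (p j)) * T (p l * y)) else 0)) := by
        rw [← Finset.sum_add_distrib]
        refine Finset.sum_congr rfl fun j hj => ?_
        rw [← Finset.sum_add_distrib]
        exact Finset.sum_congr rfl fun l hl => hFsplit j l hj hl
      rw [step1]
      congr 1
      · have e1 : ∀ j : ℕ, ∑ l ∈ Finset.range M,
            (if l = j + 1 then ((-δ : ℝ) : ℂ) • (star (T (p j)) * T (p l * y)) else 0)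
            = (if j + 1 ∈ Finset.range M
                then ((-δ : ℝ) : ℂ) • (star (T (p j)) * T (p (j + 1) * y)) else 0) := by
          intro j
          exact Finset.sum_ite_eq' (Finset.range M) (j + 1)
            (fun l => ((-δ : ℝ) : ℂ) • (star (T (p j)) * T (p l * y)))
        rw [Finset.sum_congr rfl fun j _ => e1 j]
        rw [← Finset.sum_filter]
        have e2 : (Finset.range M).filter (fun j => j + 1 ∈ Finset.range M)
            = Finset.range (M - 1) := by
          ext j
          simp only [Finset.mem_filter, Finset.mem_range]
          omega
        rw [e2, Finset.smul_sum]
      · have e1 : ∀ j : ℕ, ∑ l ∈ Finset.range M,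
            (if j = l + 1 then ((δ : ℝ) : ℂ) • (star (T (p j)) * T (p l * y)) else 0)
            = ∑ l ∈ Finset.range M,
            (if l + 1 = j then ((δ : ℝ) : ℂ) • (star (T (p j)) * T (p l * y)) else 0) := by
          intro j
          refine Finset.sum_congr rfl fun l _ => ?_
          congr 1
          simp [eq_comm]
        rw [Finset.sum_congr rfl fun j _ => e1 j, Finset.sum_comm]
        have e3 : ∀ l : ℕ, ∑ j ∈ Finset.range M,
            (if l + 1 = j then ((δ : ℝ) : ℂ) • (star (T (p j)) * T (p l * y)) else 0)
            = (if l + 1 ∈ Finset.range M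
                then ((δ : ℝ) : ℂ) • (star (T (p (l + 1))) * T (p l * y)) else 0) := by
          intro l
          have := Finset.sum_ite_eq' (Finset.range M) (l + 1)
            (fun j => ((δ : ℝ) : ℂ) • (star (T (p j)) * T (p l * y)))
          simpa [eq_comm] using this
        rw [Finset.sum_congr rfl fun l _ => e3 l]
        rw [← Finset.sum_filter]
        have e2 : (Finset.range M).filter (fun j => j + 1 ∈ Finset.range M)
            = Finset.range (M - 1) := by
          ext j
          simp only [Finset.mem_filter, Finset.mem_range]
          omega
        rw [e2, Finset.smul_sum]
    -- strip norm bound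
    have hstripnorm : ∀ u v : ℕ → ℕ,
        (∀ j l, j ≠ l → j % 3 = l % 3 → star (p (u j)) * p (v l) = 0) →
        (∀ J : Finset ℕ, J ⊆ Finset.range (M - 1) → ‖∑ j ∈ J, p (u j)‖ ≤ 1) →
        (∀ J : Finset ℕ, J ⊆ Finset.range (M - 1) → ‖∑ j ∈ J, p (v j)‖ ≤ 1) →
        ‖∑ j ∈ Finset.range (M - 1), star (T (p (u j))) * T (p (v j) * y)‖ ≤ 12 * ‖y‖ := by
      intro u v horth hnu hnv
      rw [← Finset.sum_fiberwise_of_maps_to (g := fun j => j % 3) (t := Finset.range 3)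
        (fun x _ => Finset.mem_range.mpr (Nat.mod_lt _ (by norm_num)))
        (fun j => star (T (p (u j))) * T (p (v j) * y))]
      calc ‖∑ r ∈ Finset.range 3, ∑ j ∈ (Finset.range (M - 1)).filter (fun j => j % 3 = r),
              star (T (p (u j))) * T (p (v j) * y)‖
          ≤ ∑ r ∈ Finset.range 3, ‖∑ j ∈ (Finset.range (M - 1)).filter (fun j => j % 3 = r),
              star (T (p (u j))) * T (p (v j) * y)‖ := norm_sum_le _ _
        _ ≤ ∑ _r ∈ Finset.range 3, 4 * ‖y‖ := by
            refine Finset.sum_le_sum fun r _ => ?_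
            set J := (Finset.range (M - 1)).filter (fun j => j % 3 = r) with hJ
            have hJsub : J ⊆ Finset.range (M - 1) := Finset.filter_subset _ _
            rw [← collapse T hb J (fun j => p (u j)) (fun j => p (v j)) y
              (fun j hj l hl hne => horth j l hne (by
                have h1 := (Finset.mem_filter.mp hj).2
                have h2 := (Finset.mem_filter.mp hl).2
                omega))]
            have hb1 : ‖T (∑ j ∈ J, p (u j))‖ ≤ 2 := by
              calc ‖T (∑ j ∈ J, p (u j))‖ ≤ 2 * ‖∑ j ∈ J, p (u j)‖ := hTle _
                _ ≤ 2 * 1 := by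
                    have := hnu J hJsub
                    linarith
                _ = 2 := by ring
            have hb2 : ‖T ((∑ j ∈ J, p (v j)) * y)‖ ≤ 2 * ‖y‖ := by
              calc ‖T ((∑ j ∈ J, p (v j)) * y)‖ ≤ 2 * ‖(∑ j ∈ J, p (v j)) * y‖ := hTle _
                _ ≤ 2 * (‖∑ j ∈ J, p (v j)‖ * ‖y‖) := by
                    have := norm_mul_le (∑ j ∈ J, p (v j)) y
                    linarith
                _ ≤ 2 * (1 * ‖y‖) := by
                    have h1 := hnv J hJsub
                    exact mul_le_mul_of_nonneg_left
                      (mul_le_mul_of_nonneg_right h1 (norm_nonneg y)) (by norm_num)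
                _ = 2 * ‖y‖ := by ring
            calc ‖star (T (∑ j ∈ J, p (u j))) * T ((∑ j ∈ J, p (v j)) * y)‖
                ≤ ‖star (T (∑ j ∈ J, p (u j)))‖ * ‖T ((∑ j ∈ J, p (v j)) * y)‖ :=
                  norm_mul_le _ _
              _ = ‖T (∑ j ∈ J, p (u j))‖ * ‖T ((∑ j ∈ J, p (v j)) * y)‖ := by rw [norm_star]
              _ ≤ 2 * (2 * ‖y‖) :=
                  mul_le_mul hb1 hb2 (norm_nonneg _) (by norm_num)
              _ = 4 * ‖y‖ := by ring
        _ = 12 * ‖y‖ := by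
            rw [Finset.sum_const, Finset.card_range]
            push_cast
            ring
    have hsub1 : ∀ J : Finset ℕ, J ⊆ Finset.range (M - 1) → ‖∑ j ∈ J, p j‖ ≤ 1 := by
      intro J hJ
      exact hpJnorm J (hJ.trans (Finset.range_subset_range.mpr (Nat.sub_le M 1)))
    have hsub2 : ∀ J : Finset ℕ, J ⊆ Finset.range (M - 1) → ‖∑ j ∈ J, p (j + 1)‖ ≤ 1 := by
      intro J hJ
      have e1 : ∑ j ∈ J, p (j + 1) = ∑ i ∈ J.image (fun j => j + 1), p i := by
        rw [Finset.sum_image (fun x _ y _ h => by omega)]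
      rw [e1]
      refine hpJnorm _ fun i hi => ?_
      obtain ⟨j, hj, rfl⟩ := Finset.mem_image.mp hi
      have := Finset.mem_range.mp (hJ hj)
      exact Finset.mem_range.mpr (by omega)
    have hdiag1 : ‖∑ j ∈ Finset.range (M - 1), star (T (p j)) * T (p (j + 1) * y)‖
        ≤ 12 * ‖y‖ := by
      refine hstripnorm (fun j => j) (fun j => j + 1) ?_ hsub1 hsub2
      intro j l hne hmod
      rw [(hpsa j).star_eq]
      exact hporth j (l + 1) (by omega)
    have hdiag2 : ‖∑ j ∈ Finset.range (M - 1), star (T (p (j + 1))) * T (p j * y)‖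
        ≤ 12 * ‖y‖ := by
      refine hstripnorm (fun j => j + 1) (fun j => j) ?_ hsub2 hsub1
      intro j l hne hmod
      rw [(hpsa (j + 1)).star_eq]
      exact hporth (j + 1) l (by omega)
    -- final assembly
    have hDsplit : star (T z) * T y - star (T 1) * T (z * y)
        = star (T (z - zh)) * T y
          + (star (T zh) * T y - star (T 1) * T (zh * y))
          + star (T 1) * T ((zh - z) * y) := by
      rw [sub_mul zh z y, map_sub, map_sub, star_sub, sub_mul, mul_sub]
      abel
    rw [hDsplit]
    have hA1 : ‖star (T (z - zh)) * T y‖ ≤ 4 * δ * ‖y‖ := by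
      calc ‖star (T (z - zh)) * T y‖ ≤ ‖star (T (z - zh))‖ * ‖T y‖ := norm_mul_le _ _
        _ = ‖T (z - zh)‖ * ‖T y‖ := by rw [norm_star]
        _ ≤ (2 * δ) * (2 * ‖y‖) := by
            have hx : ‖T (z - zh)‖ ≤ 2 * δ := (hTle _).trans (by linarith [hzzh])
            exact mul_le_mul hx (hTle y) (norm_nonneg _) (by positivity)
        _ = 4 * δ * ‖y‖ := by ring
    have hA3 : ‖star (T 1) * T ((zh - z) * y)‖ ≤ 4 * δ * ‖y‖ := by
      have hzz' : ‖zh - z‖ ≤ δ := by rw [norm_sub_rev]; exact hzzh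
      calc ‖star (T 1) * T ((zh - z) * y)‖
          ≤ ‖star (T (1 : A))‖ * ‖T ((zh - z) * y)‖ := norm_mul_le _ _
        _ = ‖T (1 : A)‖ * ‖T ((zh - z) * y)‖ := by rw [norm_star]
        _ ≤ (2 * 1) * (2 * (δ * ‖y‖)) := by
            have h3 : ‖(zh - z) * y‖ ≤ δ * ‖y‖ :=
              (norm_mul_le _ _).trans (mul_le_mul_of_nonneg_right hzz' (norm_nonneg y))
            have h4 : ‖T (1 : A)‖ ≤ 2 * 1 := by
              have hn1 : ‖(1 : A)‖ = 1 := norm_one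
              calc ‖T (1 : A)‖ ≤ 2 * ‖(1 : A)‖ := hTle 1
                _ = 2 * 1 := by rw [hn1]
            have h5 : ‖T ((zh - z) * y)‖ ≤ 2 * (δ * ‖y‖) :=
              (hTle _).trans (mul_le_mul_of_nonneg_left h3 (by norm_num))
            exact mul_le_mul h4 h5 (norm_nonneg _) (by norm_num)
        _ = 4 * (δ * ‖y‖) := by ring
        _ = 4 * δ * ‖y‖ := by ring
    have hA2 : ‖star (T zh) * T y - star (T 1) * T (zh * y)‖ ≤ 24 * δ * ‖y‖ := by
      rw [hterm2, hdouble]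
      calc ‖((-δ : ℝ) : ℂ) • (∑ j ∈ Finset.range (M - 1), star (T (p j)) * T (p (j + 1) * y))
            + ((δ : ℝ) : ℂ) • (∑ j ∈ Finset.range (M - 1), star (T (p (j + 1))) * T (p j * y))‖
          ≤ ‖((-δ : ℝ) : ℂ) • (∑ j ∈ Finset.range (M - 1), star (T (p j)) * T (p (j + 1) * y))‖
            + ‖((δ : ℝ) : ℂ) • (∑ j ∈ Finset.range (M - 1), star (T (p (j + 1))) * T (p j * y))‖ :=
            norm_add_le _ _
        _ ≤ δ * (12 * ‖y‖) + δ * (12 * ‖y‖) := by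
            rw [norm_smul, norm_smul]
            have e1 : ‖((-δ : ℝ) : ℂ)‖ = δ := by
              rw [Complex.norm_real, Real.norm_eq_abs, abs_neg, abs_of_pos hδ]
            have e2 : ‖((δ : ℝ) : ℂ)‖ = δ := by
              rw [Complex.norm_real, Real.norm_eq_abs, abs_of_pos hδ]
            rw [e1, e2]
            exact add_le_add (mul_le_mul_of_nonneg_left hdiag1 hδ.le)
              (mul_le_mul_of_nonneg_left hdiag2 hδ.le)
        _ = 24 * δ * ‖y‖ := by ring
    calc ‖star (T (z - zh)) * T y
          + (star (T zh) * T y - star (T 1) * T (zh * y))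
          + star (T 1) * T ((zh - z) * y)‖
        ≤ ‖star (T (z - zh)) * T y
            + (star (T zh) * T y - star (T 1) * T (zh * y))‖
          + ‖star (T 1) * T ((zh - z) * y)‖ := norm_add_le _ _
      _ ≤ ‖star (T (z - zh)) * T y‖ + ‖star (T zh) * T y - star (T 1) * T (zh * y)‖
          + ‖star (T 1) * T ((zh - z) * y)‖ := by
          have := norm_add_le (star (T (z - zh)) * T y)
            (star (T zh) * T y - star (T 1) * T (zh * y))
          linarith
      _ ≤ 4 * δ * ‖y‖ + 24 * δ * ‖y‖ + 4 * δ * ‖y‖ := by linarith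
      _ ≤ δ * (32 * (‖y‖ + 1)) := by nlinarith [norm_nonneg y, hδ.le]

  have hD0 : ‖star (T z) * T y - star (T 1) * T (z * y)‖ ≤ 0 := by
    refine le_of_forall_pos_le_add fun ε hε => ?_
    have hpos : (0:ℝ) < 32 * (‖y‖ + 1) := by positivity
    have hde : 0 < ε / (32 * (‖y‖ + 1)) := by positivity
    calc ‖star (T z) * T y - star (T 1) * T (z * y)‖
        ≤ (ε / (32 * (‖y‖ + 1))) * (32 * (‖y‖ + 1)) := key _ hde
      _ = ε := div_mul_cancel₀ ε (ne_of_gt hpos)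
      _ ≤ 0 + ε := by linarith
  have hD : star (T z) * T y - star (T 1) * T (z * y) = 0 := norm_le_zero_iff.mp hD0
  rwa [sub_eq_zero] at hD


end Core

end StmtAux

theorem stmt6 {A B : Type*}
    [NormedRing A] [StarRing A] [CStarRing A] [CompleteSpace A]
    [NormedAlgebra ℂ A] [StarModule ℂ A]
    [NonUnitalNormedRing B] [StarRing B] [CStarRing B] [CompleteSpace B]
    [NormedSpace ℂ B] [IsScalarTower ℂ B B] [SMulCommClass ℂ B B] [StarModule ℂ B]
    (T : A →ₗ[ℂ] B)
    (ha : ∀ a b : A, a * star b = 1 → T a * star (T b) = T 1)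
    (hb : ∀ c d : A, star c * d = 0 → star (T c) * T d = 0) :
    (∀ x y : A, T (x * y) = T x * T y) ∧ (∀ x : A, T (star x) = star (T x)) := by
  rcases subsingleton_or_nontrivial A with hs | hn
  · refine ⟨fun x y => ?_, fun x => ?_⟩
    · rw [Subsingleton.elim (x * y) 0, Subsingleton.elim x 0, Subsingleton.elim y 0,
        map_zero, mul_zero]
    · rw [Subsingleton.elim (star x) 0, Subsingleton.elim x 0, map_zero, star_zero]
  · letI : CStarAlgebra A := { }
    letI : NonUnitalCStarAlgebra B := { }
    have hTle : ∀ x : A, ‖T x‖ ≤ 2 * ‖x‖ := StmtAux.norm_T_le T ha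
    have hstar1 : star (T 1) = T 1 := StmtAux.h_star T ha
    have habs : ∀ x : A, T 1 * T x = T x := StmtAux.h_absorb T ha
    have hM : ∀ w y : A, star (T (star w)) * T y = star (T 1) * T (w * y) := by
      intro w y
      obtain ⟨h1, h2, h3, -, -⟩ := StmtAux.re_decomp w
      generalize hq1 : (2⁻¹ : ℂ) • (w + star w) = w1 at h1 h3
      generalize hq2 : (2⁻¹ : ℂ) • (Complex.I • (star w - w)) = w2 at h2 h3
      have hsw : star w = w1 - Complex.I • w2 := by
        have hcs := congrArg star h3
        rw [star_add, h1.star_eq, star_smul, Complex.star_def, Complex.conj_I, h2.star_eq,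
          neg_smul] at hcs
        rw [hcs, sub_eq_add_neg]
      have hTsw : T (star w) = T w1 - Complex.I • T w2 := by
        rw [hsw, map_sub, map_smul]
      calc star (T (star w)) * T y
          = (star (T w1) + Complex.I • star (T w2)) * T y := by
            rw [hTsw, star_sub, star_smul, Complex.star_def, Complex.conj_I, neg_smul,
              sub_neg_eq_add]
        _ = star (T w1) * T y + Complex.I • (star (T w2) * T y) := by
            rw [add_mul, smul_mul_assoc]
        _ = star (T 1) * T (w1 * y) + Complex.I • (star (T 1) * T (w2 * y)) := by
            rw [StmtAux.M1 T hb hTle w1 h1 y, StmtAux.M1 T hb hTle w2 h2 y]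
        _ = star (T 1) * (T (w1 * y) + Complex.I • T (w2 * y)) := by
            rw [mul_add, mul_smul_comm]
        _ = star (T 1) * T ((w1 + Complex.I • w2) * y) := by
            rw [add_mul, smul_mul_assoc, map_add, map_smul]
        _ = star (T 1) * T (w * y) := by rw [← h3]
    have hA : ∀ x : A, star (T x) * T 1 = T (star x) := by
      intro x
      have h := hM (star x) 1
      rw [star_star, mul_one, hstar1] at h
      rw [h, habs]
    have hB : ∀ x : A, star (T (star x)) = T x := by
      intro x
      have h := congrArg star (hA x)
      rw [star_mul, star_star] at h
      rw [← h, hstar1, habs]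
    have hstarpres : ∀ x : A, T (star x) = star (T x) := by
      intro x
      calc T (star x) = star (star (T (star x))) := (star_star _).symm
        _ = star (T x) := by rw [hB x]
    refine ⟨fun x y => ?_, hstarpres⟩
    have h := hM x y
    rw [hB x, hstar1, habs] at h
    exact h.symm
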